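/- arXiv:2205.07818 — 2 statements merged into one kernel-verified Lean document; each statement's English description precedes it below -/
import Mathlib

section
/- Let (A_ι)_{ι∈I} be a family of n×n symmetric matrices all of whose eigenvalues lie in [λ, Λ] with 0 < λ ≤ Λ, and define F(X) = inf_{ι∈I} tr(A_ι X) + ∑_{i=1}^n arctan(1 + e_i(X)), where e_i(X) are the eigenvalues of X. Then for every symmetric matrix X, the recession limit lim_{τ→0⁺} τ F(X/τ) exists and equals F♯(X) = inf_{ι∈I} tr(A_ι X). In particular the (neither convex nor concave) operator F has a concave recession operator. -/
noncomputable def eigs {n : ℕ} (X : Matrix (Fin n) (Fin n) ℝ) : Fin n → ℝ :=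
  if h : X.IsHermitian then h.eigenvalues else 0

noncomputable def pucciSup {n : ℕ} (lam Lam : ℝ) (X : Matrix (Fin n) (Fin n) ℝ) : ℝ :=
  Lam * ∑ i, max (eigs X i) 0 + lam * ∑ i, min (eigs X i) 0

noncomputable def pucciInf {n : ℕ} (lam Lam : ℝ) (X : Matrix (Fin n) (Fin n) ℝ) : ℝ :=
  lam * ∑ i, max (eigs X i) 0 + Lam * ∑ i, min (eigs X i) 0

noncomputable def trNorm {n : ℕ} (X : Matrix (Fin n) (Fin n) ℝ) : ℝ := ∑ i, |eigs X i|

noncomputable def opN {n : ℕ} (X : Matrix (Fin n) (Fin n) ℝ) : ℝ := ⨆ i, |eigs X i|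
open Matrix

lemma quadform {n : ℕ} {M : Matrix (Fin n) (Fin n) ℝ} (h : M.PosSemidef)
    (i j : Fin n) (a b : ℝ) :
    0 ≤ a * (M i i * a + M i j * b) + b * (M j i * a + M j j * b) := by
  have h0 := h.dotProduct_mulVec_nonneg (Pi.single i a + Pi.single j b)
  simp only [star_trivial, Matrix.mulVec_add, Matrix.mulVec_single, add_dotProduct,
    single_dotProduct, mul_one, Pi.add_apply, Pi.smul_apply, Matrix.col_apply, op_smul_eq_mul] at h0
  nlinarith [h0]

lemma psd_entry {n : ℕ} {M : Matrix (Fin n) (Fin n) ℝ} (h : M.PosSemidef)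
    (i j : Fin n) : 2 * |M i j| ≤ M i i + M j j := by
  have hs : M j i = M i j := by
    have := h.1
    have := congrFun (congrFun this j) i
    simp only [Matrix.conjTranspose_apply, star_trivial] at this
    exact this.symm
  have h1 := quadform h i j 1 1
  have h2 := quadform h i j 1 (-1)
  rw [hs] at h1 h2
  rcases abs_cases (M i j) with ⟨he, _⟩ | ⟨he, _⟩ <;> rw [he] <;> nlinarith

lemma entry_le {n : ℕ} {lam Lam : ℝ} (h0 : 0 < lam) {M : Matrix (Fin n) (Fin n) ℝ}
    (hB : (M - lam • (1 : Matrix (Fin n) (Fin n) ℝ)).PosSemidef)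
    (hC : (Lam • (1 : Matrix (Fin n) (Fin n) ℝ) - M).PosSemidef) (i j : Fin n) :
    |M i j| ≤ Lam := by
  have hdiag : ∀ k : Fin n, lam ≤ M k k ∧ M k k ≤ Lam := by
    intro k
    have hb := psd_entry hB k k
    have hc := psd_entry hC k k
    simp only [Matrix.sub_apply, Matrix.smul_apply, Matrix.one_apply_eq, smul_eq_mul,
      mul_one] at hb hc
    constructor
    · nlinarith [abs_nonneg (M k k - lam)]
    · nlinarith [abs_nonneg (Lam - M k k)]
  rcases eq_or_ne i j with rfl | hij
  · have := hdiag i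
    rw [abs_le]; constructor <;> nlinarith
  · have hb := psd_entry hB i j
    have h1 : (M - lam • (1 : Matrix (Fin n) (Fin n) ℝ)) i j = M i j := by
      simp [Matrix.sub_apply, Matrix.smul_apply, Matrix.one_apply_ne hij]
    have h2 : (M - lam • (1 : Matrix (Fin n) (Fin n) ℝ)) i i = M i i - lam := by
      simp [Matrix.sub_apply, Matrix.smul_apply, Matrix.one_apply_eq]
    have h3 : (M - lam • (1 : Matrix (Fin n) (Fin n) ℝ)) j j = M j j - lam := by
      simp [Matrix.sub_apply, Matrix.smul_apply, Matrix.one_apply_eq]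
    rw [h1, h2, h3] at hb
    have := hdiag i; have := hdiag j
    linarith

lemma trace_bound {n : ℕ} {Lam : ℝ} (hL : 0 ≤ Lam) {M X : Matrix (Fin n) (Fin n) ℝ}
    (hM : ∀ i j, |M i j| ≤ Lam) :
    |(M * X).trace| ≤ Lam * ∑ i, ∑ j, |X i j| := by
  have h1 : (M * X).trace = ∑ i, ∑ j, M i j * X j i := by
    simp [Matrix.trace, Matrix.diag, Matrix.mul_apply]
  rw [h1]
  calc |∑ i, ∑ j, M i j * X j i| ≤ ∑ i, ∑ j, |M i j * X j i| := by
        refine (Finset.abs_sum_le_sum_abs _ _).trans ?_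
        exact Finset.sum_le_sum fun i _ => Finset.abs_sum_le_sum_abs _ _
    _ ≤ ∑ i, ∑ j, Lam * |X j i| := by
        refine Finset.sum_le_sum fun i _ => Finset.sum_le_sum fun j _ => ?_
        rw [abs_mul]
        exact mul_le_mul_of_nonneg_right (hM i j) (abs_nonneg _)
    _ = Lam * ∑ i, ∑ j, |X i j| := by
        rw [Finset.mul_sum, Finset.sum_comm]
        simp [Finset.mul_sum]


/-- Perturbed Bellman operator: recession of
F(X) = inf_ι tr(A_ι X) + ∑ arctan(1 + e_i(X)) is the concave operator inf_ι tr(A_ι X). -/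
theorem stmt5 {n : ℕ} {I : Type*} [Nonempty I] (lam Lam : ℝ) (h0 : 0 < lam) (h1 : lam ≤ Lam)
    (A : I → Matrix (Fin n) (Fin n) ℝ)
    (hA : ∀ ι : I, (A ι).IsHermitian ∧
      (A ι - lam • (1 : Matrix (Fin n) (Fin n) ℝ)).PosSemidef ∧
      (Lam • (1 : Matrix (Fin n) (Fin n) ℝ) - A ι).PosSemidef) :
    (∀ X : Matrix (Fin n) (Fin n) ℝ, X.IsHermitian →
      Filter.Tendsto (fun τ : ℝ => τ *
          ((⨅ ι : I, (A ι * (τ⁻¹ • X)).trace) + ∑ i, Real.arctan (1 + eigs (τ⁻¹ • X) i)))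
        (nhdsWithin 0 (Set.Ioi 0)) (nhds (⨅ ι : I, (A ι * X).trace))) ∧
    ConcaveOn ℝ Set.univ (fun X : Matrix (Fin n) (Fin n) ℝ => ⨅ ι : I, (A ι * X).trace) := by
  have hLam : (0:ℝ) < Lam := lt_of_lt_of_le h0 h1
  have hbound : ∀ (X : Matrix (Fin n) (Fin n) ℝ) (ι : I),
      |(A ι * X).trace| ≤ Lam * ∑ i, ∑ j, |X i j| := fun X ι =>
    trace_bound hLam.le (entry_le h0 (hA ι).2.1 (hA ι).2.2)
  have hbdd : ∀ X : Matrix (Fin n) (Fin n) ℝ,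
      BddBelow (Set.range fun ι : I => (A ι * X).trace) := by
    intro X
    refine ⟨-(Lam * ∑ i, ∑ j, |X i j|), ?_⟩
    rintro _ ⟨ι, rfl⟩
    linarith [(abs_le.mp (hbound X ι)).1]
  constructor
  · intro X _
    set L := ⨅ ι : I, (A ι * X).trace with hL
    have key : ∀ τ ∈ Set.Ioi (0:ℝ),
        τ * ((⨅ ι : I, (A ι * (τ⁻¹ • X)).trace) + ∑ i, Real.arctan (1 + eigs (τ⁻¹ • X) i))
        = L + τ * ∑ i, Real.arctan (1 + eigs (τ⁻¹ • X) i) := by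
      intro τ hτ
      have hτ0 : (0:ℝ) < τ := hτ
      have h2 : (⨅ ι : I, (A ι * (τ⁻¹ • X)).trace) = τ⁻¹ * L := by
        simp_rw [Matrix.mul_smul, Matrix.trace_smul, smul_eq_mul]
        rw [hL, ← Real.mul_iInf_of_nonneg (inv_nonneg.mpr hτ0.le)]
      rw [h2, mul_add, ← mul_assoc, mul_inv_cancel₀ hτ0.ne', one_mul]
    have hS : Filter.Tendsto (fun τ : ℝ => τ * ∑ i, Real.arctan (1 + eigs (τ⁻¹ • X) i))
        (nhdsWithin 0 (Set.Ioi 0)) (nhds 0) := by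
      have hg : Filter.Tendsto (fun τ : ℝ => |τ| * ((n : ℝ) * (Real.pi / 2)))
          (nhdsWithin 0 (Set.Ioi 0)) (nhds 0) := by
        have := ((continuous_abs.tendsto 0).mono_left
          (nhdsWithin_le_nhds (s := Set.Ioi (0:ℝ)))).mul_const ((n : ℝ) * (Real.pi / 2))
        simpa using this
      refine squeeze_zero_norm' ?_ hg
      filter_upwards with τ
      rw [Real.norm_eq_abs, abs_mul]
      refine mul_le_mul_of_nonneg_left ?_ (abs_nonneg _)
      calc |∑ i, Real.arctan (1 + eigs (τ⁻¹ • X) i)|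
          ≤ ∑ i : Fin n, |Real.arctan (1 + eigs (τ⁻¹ • X) i)| :=
            Finset.abs_sum_le_sum_abs _ _
        _ ≤ ∑ _i : Fin n, Real.pi / 2 := by
            refine Finset.sum_le_sum fun i _ => ?_
            exact abs_le.mpr ⟨(Real.neg_pi_div_two_lt_arctan _).le,
              (Real.arctan_lt_pi_div_two _).le⟩
        _ = (n : ℝ) * (Real.pi / 2) := by simp [Finset.sum_const, mul_comm]
    have hmain : Filter.Tendsto
        (fun τ : ℝ => L + τ * ∑ i, Real.arctan (1 + eigs (τ⁻¹ • X) i))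
        (nhdsWithin 0 (Set.Ioi 0)) (nhds L) := by
      simpa using (tendsto_const_nhds (x := L)).add hS
    refine hmain.congr' ?_
    filter_upwards [eventually_mem_nhdsWithin] with τ hτ
    exact (key τ hτ).symm
  · refine ⟨convex_univ, ?_⟩
    intro x _ y _ a b ha hb hab
    simp only [smul_eq_mul]
    refine le_ciInf fun ι => ?_
    have hlin : (A ι * (a • x + b • y)).trace
        = a * (A ι * x).trace + b * (A ι * y).trace := by
      rw [Matrix.mul_add, Matrix.mul_smul, Matrix.mul_smul, Matrix.trace_add,
        Matrix.trace_smul, Matrix.trace_smul, smul_eq_mul, smul_eq_mul]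
    rw [hlin]
    exact add_le_add (mul_le_mul_of_nonneg_left (ciInf_le (hbdd x) ι) ha)
      (mul_le_mul_of_nonneg_left (ciInf_le (hbdd y) ι) hb)
end

section
/- Let 0 < δ < λ ≤ Λ, let F : Sym(n) → ℝ satisfy F(0) = 0 and P⁻_{λ,Λ}(X−Y) ≤ F(X) − F(Y) ≤ P⁺_{λ,Λ}(X−Y) for all symmetric X, Y, and for j ∈ ℕ set C_j = j(2Λ − λ + δ) and F_j(X) = max{ F(X), L_δ(X) − C_j } with L_δ = P⁺_{λ−δ,Λ+δ}. Then: (i) F_j(X) = F(X) whenever ‖X‖ ≤ j (trace norm); and (ii) the recession operator of F_j is L_δ, i.e. lim_{τ→0⁺} τ F_j(X/τ) = L_δ(X) for every symmetric X. -/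
open Polynomial Matrix in
lemma conj_charpoly {n : ℕ} (U V D : Matrix (Fin n) (Fin n) ℝ) (h1 : U * V = 1)
    (h2 : V * U = 1) : (U * D * V).charpoly = D.charpoly := by
  set f : Matrix (Fin n) (Fin n) ℝ →+* Matrix (Fin n) (Fin n) ℝ[X] :=
    (C : ℝ →+* ℝ[X]).mapMatrix with hf
  have hcomm : ∀ A : Matrix (Fin n) (Fin n) ℝ[X],
      Matrix.scalar (Fin n) (X : ℝ[X]) * A = A * Matrix.scalar (Fin n) (X : ℝ[X]) :=
    fun A => (Matrix.scalar_commute (X : ℝ[X]) (fun r => Commute.all _ r) A).eq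
  have key : (U * D * V).charmatrix = f U * D.charmatrix * f V := by
    show Matrix.scalar _ X - f (U*D*V) = f U * (Matrix.scalar _ X - f D) * f V
    rw [_root_.map_mul, _root_.map_mul, mul_sub, sub_mul]
    congr 1
    rw [← hcomm (f U), mul_assoc, ← _root_.map_mul, h1, _root_.map_one, mul_one]
  have hUV : f V * f U = 1 := by rw [← _root_.map_mul, h2, _root_.map_one]
  unfold Matrix.charpoly
  rw [key, det_mul, det_mul, mul_comm, ← mul_assoc, ← det_mul, hUV, det_one, one_mul]

open Polynomial Matrix Finset in
lemma charpoly_diagonal_fin {n : ℕ} (d : Fin n → ℝ) :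
    (Matrix.diagonal d).charpoly
      = ((Finset.univ.val.map d).map fun a => Polynomial.X - Polynomial.C a).prod := by
  rw [Matrix.charpoly_of_upperTriangular _ (Matrix.blockTriangular_diagonal d),
    Multiset.map_map]
  rw [Finset.prod_eq_multiset_prod]
  simp

open Polynomial Matrix Finset in
lemma herm_charpoly {n : ℕ} {A : Matrix (Fin n) (Fin n) ℝ} (hA : A.IsHermitian) :
    A.charpoly
      = ((Finset.univ.val.map (eigs A)).map fun a => Polynomial.X - Polynomial.C a).prod := by
  have hofReal : (RCLike.ofReal ∘ hA.eigenvalues : Fin n → ℝ) = hA.eigenvalues := rfl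
  have h1 : (hA.eigenvectorUnitary : Matrix (Fin n) (Fin n) ℝ) * star (hA.eigenvectorUnitary : Matrix (Fin n) (Fin n) ℝ) = 1 :=
    (Matrix.mem_unitaryGroup_iff).mp (hA.eigenvectorUnitary).2
  have h2 : star (hA.eigenvectorUnitary : Matrix (Fin n) (Fin n) ℝ) * (hA.eigenvectorUnitary : Matrix (Fin n) (Fin n) ℝ) = 1 :=
    (Matrix.mem_unitaryGroup_iff').mp (hA.eigenvectorUnitary).2
  conv_lhs => rw [hA.spectral_theorem, Unitary.conjStarAlgAut_apply]
  rw [conj_charpoly _ _ _ h1 h2, hofReal, charpoly_diagonal_fin]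
  have : eigs A = hA.eigenvalues := dif_pos hA
  rw [this]

open Polynomial Matrix Finset in
lemma eigs_smul_multiset {n : ℕ} (c : ℝ) (A : Matrix (Fin n) (Fin n) ℝ)
    (hA : A.IsHermitian) (hcA : (c • A).IsHermitian) :
    Finset.univ.val.map (eigs (c • A)) = Finset.univ.val.map (fun i => c * eigs A i) := by
  have h1 : (hA.eigenvectorUnitary : Matrix (Fin n) (Fin n) ℝ) * star (hA.eigenvectorUnitary : Matrix (Fin n) (Fin n) ℝ) = 1 :=
    (Matrix.mem_unitaryGroup_iff).mp (hA.eigenvectorUnitary).2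
  have h2 : star (hA.eigenvectorUnitary : Matrix (Fin n) (Fin n) ℝ) * (hA.eigenvectorUnitary : Matrix (Fin n) (Fin n) ℝ) = 1 :=
    (Matrix.mem_unitaryGroup_iff').mp (hA.eigenvectorUnitary).2
  have hspec : c • A = (hA.eigenvectorUnitary : Matrix (Fin n) (Fin n) ℝ)
      * Matrix.diagonal (fun i => c * eigs A i)
      * star (hA.eigenvectorUnitary : Matrix (Fin n) (Fin n) ℝ) := by
    conv_lhs => rw [hA.spectral_theorem, Unitary.conjStarAlgAut_apply]
    have : (Matrix.diagonal (fun i => c * eigs A i) : Matrix (Fin n) (Fin n) ℝ)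
        = c • Matrix.diagonal (RCLike.ofReal ∘ hA.eigenvalues) := by
      have hfun : (fun i => c * eigs A i) = c • (RCLike.ofReal ∘ hA.eigenvalues : Fin n → ℝ) := by
        funext i; rw [show eigs A = hA.eigenvalues from dif_pos hA]; rfl
      rw [hfun, Matrix.diagonal_smul]
    rw [this, Matrix.mul_smul, Matrix.smul_mul]
  have key2 : (c • A).charpoly
      = ((Finset.univ.val.map fun i => c * eigs A i).map fun a => X - C a).prod := by
    rw [hspec, conj_charpoly _ _ _ h1 h2, charpoly_diagonal_fin]
  have key1 := herm_charpoly hcA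
  have := key1.symm.trans key2
  have e1 := Polynomial.roots_multiset_prod_X_sub_C (Finset.univ.val.map (eigs (c • A)))
  have e2 := Polynomial.roots_multiset_prod_X_sub_C (Finset.univ.val.map (fun i => c * eigs A i))
  rw [← e1, ← e2, this]

open Finset in
lemma sum_eigs_smul {n : ℕ} (c : ℝ) (A : Matrix (Fin n) (Fin n) ℝ)
    (hA : A.IsHermitian) (hcA : (c • A).IsHermitian) (g : ℝ → ℝ) :
    ∑ i, g (eigs (c • A) i) = ∑ i, g (c * eigs A i) := by
  have h := congrArg (fun m => (Multiset.map g m).sum) (eigs_smul_multiset c A hA hcA)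
  simpa [Multiset.map_map, Finset.sum_eq_multiset_sum, Function.comp_def] using h

lemma herm_smul {n : ℕ} (c : ℝ) {A : Matrix (Fin n) (Fin n) ℝ} (hA : A.IsHermitian) :
    (c • A).IsHermitian := by
  rw [Matrix.IsHermitian, Matrix.conjTranspose_smul, star_trivial, hA.eq]

lemma pucciSup_smul {n : ℕ} (μ M c : ℝ) (hc : 0 ≤ c) (A : Matrix (Fin n) (Fin n) ℝ)
    (hA : A.IsHermitian) : pucciSup μ M (c • A) = c * pucciSup μ M A := by
  unfold pucciSup
  rw [sum_eigs_smul c A hA (herm_smul c hA) (fun a => max a 0),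
      sum_eigs_smul c A hA (herm_smul c hA) (fun a => min a 0)]
  have h1 : ∑ i, max (c * eigs A i) 0 = c * ∑ i, max (eigs A i) 0 := by
    rw [Finset.mul_sum]
    exact Finset.sum_congr rfl fun i _ => by rw [mul_max_of_nonneg _ _ hc, mul_zero]
  have h2 : ∑ i, min (c * eigs A i) 0 = c * ∑ i, min (eigs A i) 0 := by
    rw [Finset.mul_sum]
    exact Finset.sum_congr rfl fun i _ => by rw [mul_min_of_nonneg _ _ hc, mul_zero]
  rw [h1, h2]; ring

lemma trNorm_eq {n : ℕ} (X : Matrix (Fin n) (Fin n) ℝ) :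
    trNorm X = (∑ i, max (eigs X i) 0) - ∑ i, min (eigs X i) 0 := by
  rw [← Finset.sum_sub_distrib]
  exact Finset.sum_congr rfl fun i _ => by
    rcases le_total (eigs X i) 0 with h | h
    · rw [abs_of_nonpos h, max_eq_right h, min_eq_left h]; ring
    · rw [abs_of_nonneg h, max_eq_left h, min_eq_right h]; ring

/-- F_j = max(F, L_δ − C_j) with C_j = j(2Λ−λ+δ): F_j agrees with F on the ball of trace-norm
radius j, and its recession operator is L_δ. -/
theorem stmt9 {n : ℕ} (lam Lam δ : ℝ) (h0 : 0 < lam) (h1 : lam ≤ Lam)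
    (hδ : 0 < δ) (hdl : δ < lam)
    (F : Matrix (Fin n) (Fin n) ℝ → ℝ) (hF0 : F 0 = 0)
    (hell : ∀ X Y : Matrix (Fin n) (Fin n) ℝ, X.IsHermitian → Y.IsHermitian →
      pucciInf lam Lam (X - Y) ≤ F X - F Y ∧ F X - F Y ≤ pucciSup lam Lam (X - Y)) :
    (∀ j : ℕ, ∀ X : Matrix (Fin n) (Fin n) ℝ, X.IsHermitian → trNorm X ≤ j →
      max (F X) (pucciSup (lam - δ) (Lam + δ) X - j * (2 * Lam - lam + δ)) = F X) ∧
    (∀ j : ℕ, ∀ X : Matrix (Fin n) (Fin n) ℝ, X.IsHermitian →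
      Filter.Tendsto (fun τ : ℝ => τ * max (F (τ⁻¹ • X))
          (pucciSup (lam - δ) (Lam + δ) (τ⁻¹ • X) - j * (2 * Lam - lam + δ)))
        (nhdsWithin 0 (Set.Ioi 0)) (nhds (pucciSup (lam - δ) (Lam + δ) X))) := by
  have hSpos : ∀ X : Matrix (Fin n) (Fin n) ℝ, 0 ≤ ∑ i, max (eigs X i) 0 :=
    fun X => Finset.sum_nonneg fun i _ => le_max_right _ _
  have hSneg : ∀ X : Matrix (Fin n) (Fin n) ℝ, ∑ i, min (eigs X i) 0 ≤ 0 :=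
    fun X => Finset.sum_nonpos fun i _ => min_le_right _ _
  have hFub : ∀ X : Matrix (Fin n) (Fin n) ℝ, X.IsHermitian → F X ≤ pucciSup lam Lam X := by
    intro X hX
    have := (hell X 0 hX Matrix.isHermitian_zero).2
    simpa [hF0] using this
  have hFlb : ∀ X : Matrix (Fin n) (Fin n) ℝ, X.IsHermitian → pucciInf lam Lam X ≤ F X := by
    intro X hX
    have := (hell X 0 hX Matrix.isHermitian_zero).1
    simpa [hF0] using this
  have hPL : ∀ X : Matrix (Fin n) (Fin n) ℝ,
      pucciSup lam Lam X ≤ pucciSup (lam - δ) (Lam + δ) X := by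
    intro X
    unfold pucciSup
    nlinarith [mul_nonneg hδ.le (hSpos X), mul_nonpos_of_nonneg_of_nonpos hδ.le (hSneg X)]
  constructor
  · intro j X hX htrX
    apply max_eq_left
    have key : pucciSup (lam - δ) (Lam + δ) X - pucciInf lam Lam X
        = (Lam - lam + δ) * trNorm X := by
      unfold pucciSup pucciInf
      rw [trNorm_eq]
      ring
    have hη : (0:ℝ) ≤ Lam - lam + δ := by linarith
    have htrnn : 0 ≤ trNorm X := Finset.sum_nonneg fun i _ => abs_nonneg _
    have h2 : (Lam - lam + δ) * trNorm X ≤ (j : ℝ) * (2 * Lam - lam + δ) :=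
      calc (Lam - lam + δ) * trNorm X ≤ (Lam - lam + δ) * j :=
            mul_le_mul_of_nonneg_left htrX hη
        _ ≤ (2 * Lam - lam + δ) * j :=
            mul_le_mul_of_nonneg_right (by linarith) (Nat.cast_nonneg j)
        _ = (j : ℝ) * (2 * Lam - lam + δ) := mul_comm _ _
    have := hFlb X hX
    linarith [key]
  · intro j X hX
    set L := pucciSup (lam - δ) (Lam + δ) X with hL
    set P := pucciSup lam Lam X with hP
    set Cj := (j : ℝ) * (2 * Lam - lam + δ) with hCj
    have hCjnn : 0 ≤ Cj := mul_nonneg (Nat.cast_nonneg j) (by linarith)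
    have hPleL : P ≤ L := hPL X
    have hIoi : Set.Ioi (0:ℝ) ∈ nhdsWithin (0:ℝ) (Set.Ioi (0:ℝ)) := self_mem_nhdsWithin
    have hform : ∀ τ : ℝ, 0 < τ →
        τ * max (F (τ⁻¹ • X)) (pucciSup (lam - δ) (Lam + δ) (τ⁻¹ • X) - Cj)
          = max (τ * F (τ⁻¹ • X)) (L - τ * Cj) := by
      intro τ hτ
      rw [mul_max_of_nonneg _ _ hτ.le]
      congr 1
      rw [mul_sub, pucciSup_smul _ _ _ (inv_nonneg.2 hτ.le) X hX, ← mul_assoc,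
        mul_inv_cancel₀ hτ.ne', one_mul]
    have hup : ∀ τ : ℝ, 0 < τ →
        τ * max (F (τ⁻¹ • X)) (pucciSup (lam - δ) (Lam + δ) (τ⁻¹ • X) - Cj) ≤ L := by
      intro τ hτ
      rw [hform τ hτ]
      apply max_le
      · have hF : F (τ⁻¹ • X) ≤ pucciSup lam Lam (τ⁻¹ • X) := hFub _ (herm_smul _ hX)
        have hscale : pucciSup lam Lam (τ⁻¹ • X) = τ⁻¹ * P :=
          pucciSup_smul _ _ _ (inv_nonneg.2 hτ.le) X hX
        have : τ * F (τ⁻¹ • X) ≤ τ * (τ⁻¹ * P) :=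
          mul_le_mul_of_nonneg_left (hscale ▸ hF) hτ.le
        rw [← mul_assoc, mul_inv_cancel₀ hτ.ne', one_mul] at this
        linarith
      · nlinarith [mul_nonneg hτ.le hCjnn]
    have hlow : ∀ τ : ℝ, 0 < τ →
        L - τ * Cj ≤ τ * max (F (τ⁻¹ • X)) (pucciSup (lam - δ) (Lam + δ) (τ⁻¹ • X) - Cj) := by
      intro τ hτ
      rw [hform τ hτ]
      exact le_max_right _ _
    have htlow : Filter.Tendsto (fun τ : ℝ => L - τ * Cj)
        (nhdsWithin 0 (Set.Ioi 0)) (nhds L) := by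
      have h : Filter.Tendsto (fun τ : ℝ => L - τ * Cj) (nhds 0) (nhds (L - 0 * Cj)) :=
        Filter.Tendsto.const_sub L ((continuous_mul_right Cj).tendsto 0)
      simp only [zero_mul, sub_zero] at h
      exact h.mono_left nhdsWithin_le_nhds
    refine tendsto_of_tendsto_of_tendsto_of_le_of_le' htlow tendsto_const_nhds ?_ ?_
    · exact Filter.eventually_of_mem hIoi fun τ hτ => hlow τ hτ
    · exact Filter.eventually_of_mem hIoi fun τ hτ => hup τ hτ
end
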